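/- In U(so_{n+1}), for distinct indices i,j,s,k one has the identity R_{ijsk} = −e_{ij}[e_{is},e_{ik}] − e_{is}[e_{ik},e_{ij}] − e_{ik}[e_{ij},e_{is}]. -/

import Mathlib

open Matrix

/-- `e_{ij} = E_{ij} - E_{ji}` as an element of the Lie algebra `so_m` of skew-symmetric
complex matrices. -/
def soE (m : ℕ) (i j : Fin m) :
    ↥(skewAdjointMatricesLieSubalgebra (1 : Matrix (Fin m) (Fin m) ℂ)) :=
  ⟨Matrix.single i j 1 - Matrix.single j i 1, by
    rw [mem_skewAdjointMatricesLieSubalgebra, mem_skewAdjointMatricesSubmodule]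
    show _ᵀ * 1 = 1 * -_
    ext a b
    simp [Matrix.single, Matrix.transpose_apply, Matrix.sub_apply]
    by_cases h1 : i = b <;> by_cases h2 : j = a <;> by_cases h3 : j = b <;>
      by_cases h4 : i = a <;> simp [h1, h2, h3, h4] <;> aesop⟩

/-- `R_{ijsk} = e_{ij} e_{sk} + e_{is} e_{kj} + e_{ik} e_{js}` in `U(so_{n+1})`. -/
noncomputable def REl (n : ℕ) (i j s k : Fin (n + 1)) :
    UniversalEnvelopingAlgebra ℂ
      ↥(skewAdjointMatricesLieSubalgebra (1 : Matrix (Fin (n + 1)) (Fin (n + 1)) ℂ)) :=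
  UniversalEnvelopingAlgebra.ι ℂ (soE (n + 1) i j) * UniversalEnvelopingAlgebra.ι ℂ (soE (n + 1) s k) +
  UniversalEnvelopingAlgebra.ι ℂ (soE (n + 1) i s) * UniversalEnvelopingAlgebra.ι ℂ (soE (n + 1) k j) +
  UniversalEnvelopingAlgebra.ι ℂ (soE (n + 1) i k) * UniversalEnvelopingAlgebra.ι ℂ (soE (n + 1) j s)


lemma soE_bracket (m : ℕ) (i s k : Fin m) (his : i ≠ s) (hik : i ≠ k) (hsk : s ≠ k) :
    ⁅soE m i s, soE m i k⁆ = -(soE m s k) := by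
  apply Subtype.ext
  show ⁅(_ : Matrix (Fin m) (Fin m) ℂ), _⁆ = _
  rw [Ring.lie_def]
  simp only [soE, NegMemClass.coe_neg]
  simp only [mul_sub, sub_mul, Matrix.single_mul_single_same,
    Matrix.single_mul_single_of_ne, his, hik, hsk, his.symm, hik.symm, hsk.symm,
    ne_eq, not_false_iff, one_mul]
  ring_nf
  abel

/-- In `U(so_{n+1})`, for pairwise distinct indices `i, j, s, k` one has
`R_{ijsk} = -e_{ij}[e_{is},e_{ik}] - e_{is}[e_{ik},e_{ij}] - e_{ik}[e_{ij},e_{is}]`, where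
the products are taken in `U(so_{n+1})` and `[·,·]` is the Lie bracket of `so_{n+1}`. -/
theorem stmt_7 (n : ℕ) (i j s k : Fin (n + 1))
    (hij : i ≠ j) (his : i ≠ s) (hik : i ≠ k) (hjs : j ≠ s) (hjk : j ≠ k) (hsk : s ≠ k) :
    REl n i j s k =
      -(UniversalEnvelopingAlgebra.ι ℂ (soE (n + 1) i j) *
          UniversalEnvelopingAlgebra.ι ℂ ⁅soE (n + 1) i s, soE (n + 1) i k⁆) -
        UniversalEnvelopingAlgebra.ι ℂ (soE (n + 1) i s) *
          UniversalEnvelopingAlgebra.ι ℂ ⁅soE (n + 1) i k, soE (n + 1) i j⁆ -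
        UniversalEnvelopingAlgebra.ι ℂ (soE (n + 1) i k) *
          UniversalEnvelopingAlgebra.ι ℂ ⁅soE (n + 1) i j, soE (n + 1) i s⁆ := by
  rw [soE_bracket _ _ _ _ his hik hsk, soE_bracket _ _ _ _ hik hij hjk.symm,
    soE_bracket _ _ _ _ hij his hjs, map_neg, map_neg, map_neg, REl]
  simp only [mul_neg, neg_neg, sub_neg_eq_add]
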